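/- Let b, σ²: [0,1] → ℝ be continuous with σ² > 0, B(u) = ∫_0^u b, b̄ = B(1), and assume B(u) > b̄u on (0,1). Define Ψ(u) = ∫_{1/2}^u σ²(v)/(2(B(v)−b̄v)) dv. If b̄ − b(1) > σ²(1)/2, then ∫_0^1 exp(Ψ(1−v)) dv < ∞. If 0 < b̄ − b(1) < σ²(1)/2, then ∫_0^1 exp(Ψ(1−v)) dv = ∞. -/

import Mathlib

open Set MeasureTheory

/-- The Chatterjee–Pal phase transition: the stationary mean-field capital density
`exp(Ψ(1-v))` is integrable on `(0,1)` in the supercritical case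
`b̄ - b(1) > σ²(1)/2`, and non-integrable in the subcritical case
`0 < b̄ - b(1) < σ²(1)/2`. -/
theorem chatterjee_pal_phase_transition (b σ2 : ℝ → ℝ)
    (hbc : ContinuousOn b (Icc 0 1)) (hσc : ContinuousOn σ2 (Icc 0 1))
    (hσ : ∀ v ∈ Icc (0 : ℝ) 1, 0 < σ2 v)
    (B : ℝ → ℝ) (hB : ∀ u, B u = ∫ v in (0 : ℝ)..u, b v)
    (bbar : ℝ) (hbbar : bbar = B 1)
    (hole : ∀ u ∈ Ioo (0 : ℝ) 1, B u > bbar * u)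
    (Ψ : ℝ → ℝ)
    (hΨ : ∀ u, Ψ u = ∫ v in (1 / 2 : ℝ)..u, σ2 v / (2 * (B v - bbar * v))) :
    (σ2 1 / 2 < bbar - b 1 →
        IntegrableOn (fun v => Real.exp (Ψ (1 - v))) (Ioo 0 1) volume) ∧
    (0 < bbar - b 1 → bbar - b 1 < σ2 1 / 2 →
        ¬ IntegrableOn (fun v => Real.exp (Ψ (1 - v))) (Ioo 0 1) volume) := by
  set a : ℝ := bbar - b 1 with ha_def
  set f : ℝ → ℝ := fun v => σ2 v / (2 * (B v - bbar * v)) with hfdef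
  have hσ1 : 0 < σ2 1 := hσ 1 (by norm_num)
  have hIccOC : OrdConnected (Icc (0:ℝ) 1) := ordConnected_Icc
  have hIooOC : OrdConnected (Ioo (0:ℝ) 1) := ordConnected_Ioo
  have hbint : ∀ x ∈ Icc (0:ℝ) 1, ∀ y ∈ Icc (0:ℝ) 1, IntervalIntegrable b volume x y :=
    fun x hx y hy => (hbc.mono (hIccOC.uIcc_subset hx hy)).intervalIntegrable
  -- The "gap" function as a tail integral
  have hg_eq : ∀ v ∈ Icc (0:ℝ) 1, B v - bbar * v = ∫ t in v..(1:ℝ), (bbar - b t) := by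
    intro v hv
    have h1 : (∫ t in v..(1:ℝ), b t) = B 1 - B v := by
      rw [hB 1, hB v]
      exact (intervalIntegral.integral_interval_sub_left
        (hbint 0 (by norm_num) 1 (by norm_num)) (hbint 0 (by norm_num) v hv)).symm
    rw [intervalIntegral.integral_sub intervalIntegrable_const (hbint v hv 1 (by norm_num)),
      intervalIntegral.integral_const, h1, smul_eq_mul, hbbar]
    ring
  -- continuity of B
  have hBcont : ContinuousOn B (Icc 0 1) := by
    have h1 : IntegrableOn b (uIcc (0:ℝ) 1) volume :=
      (hbc.mono (by rw [uIcc_of_le (by norm_num : (0:ℝ) ≤ 1)])).integrableOn_compact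
        isCompact_uIcc
    have h2 := intervalIntegral.continuousOn_primitive_interval (μ := volume) h1
    rw [uIcc_of_le (by norm_num : (0:ℝ) ≤ 1)] at h2
    exact h2.congr fun u _ => hB u
  have hgpos : ∀ v ∈ Ioo (0:ℝ) 1, 0 < B v - bbar * v := fun v hv => sub_pos.2 (hole v hv)
  have hfcont : ContinuousOn f (Ioo 0 1) := by
    apply ContinuousOn.div (hσc.mono Ioo_subset_Icc_self)
      (continuousOn_const.mul ((hBcont.mono Ioo_subset_Icc_self).sub
        (continuousOn_const.mul continuousOn_id)))
    exact fun v hv => ne_of_gt (mul_pos two_pos (hgpos v hv))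
  have hfint : ∀ x ∈ Ioo (0:ℝ) 1, ∀ y ∈ Ioo (0:ℝ) 1, IntervalIntegrable f volume x y :=
    fun x hx y hy => (hfcont.mono (hIooOC.uIcc_subset hx hy)).intervalIntegrable
  have hfnn : ∀ v ∈ Ioo (0:ℝ) 1, 0 ≤ f v :=
    fun v hv => div_nonneg (hσ v (Ioo_subset_Icc_self hv)).le
      (mul_pos two_pos (hgpos v hv)).le
  have h12 : (1/2 : ℝ) ∈ Ioo (0:ℝ) 1 := by norm_num
  have hΨsub : ∀ x ∈ Ioo (0:ℝ) 1, ∀ y ∈ Ioo (0:ℝ) 1, Ψ y - Ψ x = ∫ v in x..y, f v := by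
    intro x hx y hy
    rw [hΨ y, hΨ x]
    exact intervalIntegral.integral_interval_sub_left (hfint _ h12 _ hy) (hfint _ h12 _ hx)
  have hΨmono : ∀ x ∈ Ioo (0:ℝ) 1, ∀ y ∈ Ioo (0:ℝ) 1, x ≤ y → Ψ x ≤ Ψ y := by
    intro x hx y hy hxy
    have h1 := hΨsub x hx y hy
    have h2 : 0 ≤ ∫ v in x..y, f v := by
      apply intervalIntegral.integral_nonneg hxy
      intro u hu
      have : Icc x y ⊆ Ioo 0 1 := by
        rw [← uIcc_of_le hxy]; exact hIooOC.uIcc_subset hx hy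
      exact hfnn u (this hu)
    linarith
  -- measurability of the candidate density
  have hmeas : AEStronglyMeasurable (fun v => Real.exp (Ψ (1 - v)))
      (volume.restrict (Ioo (0:ℝ) 1)) := by
    have hanti : AntitoneOn (fun v => Real.exp (Ψ (1 - v))) (Ioo (0:ℝ) 1) := by
      intro x hx y hy hxy
      exact Real.exp_le_exp.2 (hΨmono (1-y) ⟨by linarith [hy.2], by linarith [hy.1]⟩
        (1-x) ⟨by linarith [hx.2], by linarith [hx.1]⟩ (by linarith))
    exact (aemeasurable_restrict_of_antitoneOn measurableSet_Ioo hanti).aestronglyMeasurable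
  -- ε-δ continuity at 1
  have hδex : ∀ ε > (0:ℝ), ∃ δ : ℝ, 0 < δ ∧ δ < 1/2 ∧
      ∀ t ∈ Icc (1-δ) 1, |b t - b 1| ≤ ε ∧ |σ2 t - σ2 1| ≤ ε := by
    intro ε hε
    have h1 : ContinuousWithinAt b (Icc 0 1) 1 := hbc 1 (by norm_num)
    have h2 : ContinuousWithinAt σ2 (Icc 0 1) 1 := hσc 1 (by norm_num)
    rw [Metric.continuousWithinAt_iff] at h1 h2
    obtain ⟨δ1, hδ1, H1⟩ := h1 ε hε
    obtain ⟨δ2, hδ2, H2⟩ := h2 ε hε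
    refine ⟨min (min δ1 δ2 / 2) (1/4), by positivity, ?_, ?_⟩
    · calc min (min δ1 δ2 / 2) (1/4) ≤ 1/4 := min_le_right _ _
        _ < 1/2 := by norm_num
    · intro t ht
      have ht1 : t ∈ Icc (0:ℝ) 1 := by
        constructor
        · have := ht.1
          have h4 : min (min δ1 δ2 / 2) (1/4) ≤ 1/4 := min_le_right _ _
          linarith
        · exact ht.2
      have hd : dist t 1 < min δ1 δ2 := by
        rw [Real.dist_eq, abs_of_nonpos (by linarith [ht.2])]
        have := ht.1
        have h4 : min (min δ1 δ2 / 2) (1/4) ≤ min δ1 δ2 / 2 := min_le_left _ _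
        have h5 : 0 < min δ1 δ2 := lt_min hδ1 hδ2
        linarith
      constructor
      · rw [← Real.dist_eq]
        exact (H1 ht1 (lt_of_lt_of_le hd (min_le_left _ _))).le
      · rw [← Real.dist_eq]
        exact (H2 ht1 (lt_of_lt_of_le hd (min_le_right _ _))).le
  -- Key tail estimate
  have tail : ∀ ε : ℝ, 0 < ε → ε < a → ε < σ2 1 → ∃ δ : ℝ, 0 < δ ∧ δ < 1/2 ∧
      ∀ v ∈ Ioo (0:ℝ) δ,
        Ψ (1 - v) ≤ Ψ (1 - δ) + (σ2 1 + ε)/(2*(a - ε)) * (Real.log δ - Real.log v) ∧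
        Ψ (1 - δ) + (σ2 1 - ε)/(2*(a + ε)) * (Real.log δ - Real.log v) ≤ Ψ (1 - v) := by
    intro ε hε hεa hεσ
    obtain ⟨δ, hδ0, hδ2, hδprop⟩ := hδex ε hε
    refine ⟨δ, hδ0, hδ2, ?_⟩
    intro v hv
    obtain ⟨hv0, hvδ⟩ := hv
    set s : ℝ := 1 - δ with hs_def
    set u : ℝ := 1 - v with hu_def
    have hsu : s ≤ u := by simp only [hs_def, hu_def]; linarith
    have hs01 : s ∈ Ioo (0:ℝ) 1 := ⟨by simp only [hs_def]; linarith, by simp only [hs_def]; linarith⟩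
    have hu01 : u ∈ Ioo (0:ℝ) 1 := ⟨by simp only [hu_def]; linarith, by simp only [hu_def]; linarith⟩
    have hIccsub : Icc s u ⊆ Ioo (0:ℝ) 1 := by
      rw [← uIcc_of_le hsu]; exact hIooOC.uIcc_subset hs01 hu01
    -- bounds on the gap function on [s,u]
    have hgb : ∀ w ∈ Icc s u,
        (a - ε) * (1 - w) ≤ B w - bbar * w ∧ B w - bbar * w ≤ (a + ε) * (1 - w) := by
      intro w hw
      have hw01 : w ∈ Ioo (0:ℝ) 1 := hIccsub hw
      have hw1 : w ≤ 1 := hw01.2.le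
      have htIcc : ∀ t ∈ Icc w 1, t ∈ Icc (1-δ) 1 := by
        intro t ht
        exact ⟨le_trans (by simpa [hs_def] using hw.1) ht.1, ht.2⟩
      have hbI : IntervalIntegrable (fun t => bbar - b t) volume w 1 :=
        intervalIntegrable_const.sub (hbint w ⟨hw01.1.le, hw1⟩ 1 (by norm_num))
      rw [hg_eq w ⟨hw01.1.le, hw1⟩]
      constructor
      · have := intervalIntegral.integral_mono_on hw1 intervalIntegrable_const hbI
          (g := fun t => bbar - b t) (f := fun _ => a - ε) (by
            intro t ht
            have hb := (hδprop t (htIcc t ht)).1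
            rw [abs_le] at hb
            simp only [ha_def]
            linarith [hb.1])
        rwa [intervalIntegral.integral_const, smul_eq_mul, mul_comm] at this
      · have := intervalIntegral.integral_mono_on hw1 hbI intervalIntegrable_const
          (f := fun t => bbar - b t) (g := fun _ => a + ε) (by
            intro t ht
            have hb := (hδprop t (htIcc t ht)).1
            rw [abs_le] at hb
            simp only [ha_def]
            linarith [hb.2])
        rwa [intervalIntegral.integral_const, smul_eq_mul, mul_comm] at this
    have hσb : ∀ w ∈ Icc s u, σ2 1 - ε ≤ σ2 w ∧ σ2 w ≤ σ2 1 + ε := by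
      intro w hw
      have hw01 : w ∈ Ioo (0:ℝ) 1 := hIccsub hw
      have hb := (hδprop w ⟨by simpa [hs_def] using hw.1, hw01.2.le⟩).2
      rw [abs_le] at hb
      exact ⟨by linarith [hb.1], by linarith [hb.2]⟩
    -- pointwise bounds on f on [s,u]
    have hfb : ∀ w ∈ Icc s u,
        (σ2 1 - ε)/(2*(a + ε)) * (1 - w)⁻¹ ≤ f w ∧
        f w ≤ (σ2 1 + ε)/(2*(a - ε)) * (1 - w)⁻¹ := by
      intro w hw
      have hw01 : w ∈ Ioo (0:ℝ) 1 := hIccsub hw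
      have hw1 : 0 < 1 - w := by linarith [hw01.2]
      have hg := hgb w hw
      have hσw := hσb w hw
      have hgw : 0 < B w - bbar * w := hgpos w hw01
      have hden1 : 0 < 2 * ((a - ε) * (1 - w)) :=
        mul_pos two_pos (mul_pos (by linarith) hw1)
      have hden2 : 0 < 2 * ((a + ε) * (1 - w)) :=
        mul_pos two_pos (mul_pos (by linarith) hw1)
      constructor
      · have h1 : (σ2 1 - ε)/(2*((a + ε) * (1 - w))) ≤ σ2 w / (2 * (B w - bbar * w)) := by
          apply div_le_div₀ (hσ w (Ioo_subset_Icc_self hw01)).le hσw.1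
            (mul_pos two_pos hgw)
          nlinarith [hg.2]
        calc (σ2 1 - ε)/(2*(a + ε)) * (1 - w)⁻¹
            = (σ2 1 - ε)/(2*((a + ε) * (1 - w))) := by
              rw [← div_eq_mul_inv, div_div]
              congr 1
              ring
          _ ≤ f w := h1
      · have h1 : σ2 w / (2 * (B w - bbar * w)) ≤ (σ2 1 + ε)/(2*((a - ε) * (1 - w))) := by
          apply div_le_div₀ (by positivity) hσw.2 hden1
          nlinarith [hg.1]
        calc f w ≤ (σ2 1 + ε)/(2*((a - ε) * (1 - w))) := h1
          _ = (σ2 1 + ε)/(2*(a - ε)) * (1 - w)⁻¹ := by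
              rw [← div_eq_mul_inv, div_div]
              congr 1
              ring
    -- the comparison integral
    have hlog : ∀ C : ℝ, (∫ w in s..u, C * (1 - w)⁻¹) = C * (Real.log δ - Real.log v) := by
      intro C
      have hderiv : ∀ w ∈ uIcc s u, HasDerivAt (fun w => -(C * Real.log (1 - w)))
          (C * (1 - w)⁻¹) w := by
        intro w hw
        rw [uIcc_of_le hsu] at hw
        have hw1 : 0 < 1 - w := by linarith [(hIccsub hw).2]
        have h1 : HasDerivAt (fun w : ℝ => 1 - w) (-1) w := by
          simpa using (hasDerivAt_id w).const_sub 1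
        have h2 : HasDerivAt (fun w : ℝ => Real.log (1 - w)) ((1-w)⁻¹ * (-1)) w :=
          (Real.hasDerivAt_log (ne_of_gt hw1)).comp w h1
        have h3 : HasDerivAt (fun w => -(C * Real.log (1 - w))) (-(C * ((1 - w)⁻¹ * -1))) w :=
          (h2.const_mul C).neg
        convert h3 using 1
        ring
      have hci : IntervalIntegrable (fun w => C * (1 - w)⁻¹) volume s u := by
        apply ContinuousOn.intervalIntegrable
        apply continuousOn_const.mul
        apply ContinuousOn.inv₀ (continuousOn_const.sub continuousOn_id)
        intro w hw
        rw [uIcc_of_le hsu] at hw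
        simp only [Pi.sub_apply, id_eq]
        exact ne_of_gt (by linarith [(hIccsub hw).2])
      rw [intervalIntegral.integral_eq_sub_of_hasDerivAt hderiv hci]
      have h1 : (1:ℝ) - s = δ := by simp [hs_def]
      have h2 : (1:ℝ) - u = v := by simp [hu_def]
      rw [h1, h2]; ring
    have hfi : IntervalIntegrable f volume s u := hfint s hs01 u hu01
    have hΨeq : Ψ u - Ψ s = ∫ w in s..u, f w := hΨsub s hs01 u hu01
    have hci : ∀ C : ℝ, IntervalIntegrable (fun w => C * (1 - w)⁻¹) volume s u := by
      intro C
      apply ContinuousOn.intervalIntegrable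
      apply continuousOn_const.mul
      apply ContinuousOn.inv₀ (continuousOn_const.sub continuousOn_id)
      intro w hw
      rw [uIcc_of_le hsu] at hw
      simp only [Pi.sub_apply, id_eq]
      exact ne_of_gt (by linarith [(hIccsub hw).2])
    constructor
    · have h1 : (∫ w in s..u, f w) ≤ ∫ w in s..u, (σ2 1 + ε)/(2*(a - ε)) * (1 - w)⁻¹ :=
        intervalIntegral.integral_mono_on hsu hfi (hci _) (fun w hw => (hfb w hw).2)
      rw [hlog] at h1
      have := hΨeq
      linarith
    · have h1 : (∫ w in s..u, (σ2 1 - ε)/(2*(a + ε)) * (1 - w)⁻¹) ≤ ∫ w in s..u, f w :=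
        intervalIntegral.integral_mono_on hsu (hci _) hfi (fun w hw => (hfb w hw).1)
      rw [hlog] at h1
      have := hΨeq
      linarith
  constructor
  -- Supercritical case: integrable
  · intro hsup
    have ha : 0 < a := by simp only [ha_def]; linarith
    set ε : ℝ := min ((2*a - σ2 1)/4) (σ2 1 / 2) with hε_def
    have hε : 0 < ε := lt_min (by linarith) (by linarith)
    have hεa : ε < a := lt_of_le_of_lt (min_le_left _ _) (by linarith)
    have hεσ : ε < σ2 1 := lt_of_le_of_lt (min_le_right _ _) (by linarith)
    set c : ℝ := (σ2 1 + ε)/(2*(a - ε)) with hc_def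
    have hc0 : 0 < c := div_pos (by linarith) (by linarith)
    have hc1 : c < 1 := by
      rw [hc_def, div_lt_one (by linarith)]
      have h1 : ε ≤ (2*a - σ2 1)/4 := min_le_left _ _
      linarith
    obtain ⟨δ, hδ0, hδ2, hδprop⟩ := tail ε hε hεa hεσ
    set K : ℝ := Real.exp (Ψ (1 - δ) + c * Real.log δ) with hK_def
    -- integrable on (0, δ)
    have hint1 : IntegrableOn (fun v => Real.exp (Ψ (1 - v))) (Ioo 0 δ) volume := by
      have hbound : IntegrableOn (fun v => K * v ^ (-c)) (Ioo 0 δ) volume :=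
        ((intervalIntegral.integrableOn_Ioo_rpow_iff hδ0).2 (by linarith)).const_mul K
      apply Integrable.mono' hbound
        (hmeas.mono_measure (Measure.restrict_mono (Ioo_subset_Ioo le_rfl (by linarith)) le_rfl))
      rw [ae_restrict_iff' measurableSet_Ioo]
      apply ae_of_all
      intro v hv
      have hv0 : 0 < v := hv.1
      have h1 := (hδprop v hv).1
      rw [Real.norm_eq_abs, Real.abs_exp]
      calc Real.exp (Ψ (1 - v)) ≤ Real.exp (Ψ (1 - δ) + c * (Real.log δ - Real.log v)) :=
            Real.exp_le_exp.2 h1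
        _ = K * v ^ (-c) := by
            rw [hK_def, Real.rpow_def_of_pos hv0, ← Real.exp_add]
            ring_nf
    -- integrable on [δ, 1)
    have hint2 : IntegrableOn (fun v => Real.exp (Ψ (1 - v))) (Ico δ 1) volume := by
      have hsub : Ico δ 1 ⊆ Ioo (0:ℝ) 1 := fun x hx => ⟨lt_of_lt_of_le hδ0 hx.1, hx.2⟩
      apply Integrable.mono'
        ((integrableOn_const_iff (C := Real.exp (Ψ (1 - δ)))).2 (Or.inr measure_Ico_lt_top))
        (hmeas.mono_measure (Measure.restrict_mono hsub le_rfl))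
      rw [ae_restrict_iff' measurableSet_Ico]
      apply ae_of_all
      intro v hv
      rw [Real.norm_eq_abs, Real.abs_exp]
      apply Real.exp_le_exp.2
      apply hΨmono (1 - v) ⟨by linarith [hv.2], by linarith [lt_of_lt_of_le hδ0 hv.1]⟩
        (1 - δ) ⟨by linarith, by linarith⟩ (by linarith [hv.1])
    have : IntegrableOn (fun v => Real.exp (Ψ (1 - v))) (Ioo 0 δ ∪ Ico δ 1) volume :=
      hint1.union hint2
    apply this.mono_set
    intro x hx
    rcases lt_or_ge x δ with h | h
    · exact Or.inl ⟨hx.1, h⟩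
    · exact Or.inr ⟨h, hx.2⟩
  -- Subcritical case: not integrable
  · intro ha0 hsub
    have ha : 0 < a := ha0
    set ε : ℝ := min ((σ2 1 - 2*a)/4) (a/2) with hε_def
    have hε : 0 < ε := lt_min (by linarith) (by linarith)
    have hεa : ε < a := lt_of_le_of_lt (min_le_right _ _) (by linarith)
    have hεσ : ε < σ2 1 := by
      have h1 : ε ≤ (σ2 1 - 2*a)/4 := min_le_left _ _
      linarith
    set c : ℝ := (σ2 1 - ε)/(2*(a + ε)) with hc_def
    have hc1 : 1 < c := by
      rw [hc_def, lt_div_iff₀ (by linarith)]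
      have h1 : ε ≤ (σ2 1 - 2*a)/4 := min_le_left _ _
      have h2 : ε ≤ a/2 := min_le_right _ _
      linarith
    obtain ⟨δ, hδ0, hδ2, hδprop⟩ := tail ε hε hεa hεσ
    set K : ℝ := Real.exp (Ψ (1 - δ) + c * Real.log δ) with hK_def
    have hK : 0 < K := Real.exp_pos _
    intro hint
    have h1 : IntegrableOn (fun v => Real.exp (Ψ (1 - v))) (Ioo 0 δ) volume :=
      hint.mono_set (Ioo_subset_Ioo le_rfl (by linarith))
    have h2 : IntegrableOn (fun v : ℝ => v ^ (-c)) (Ioo 0 δ) volume := by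
      apply Integrable.mono' (h1.const_mul K⁻¹)
      · apply ContinuousOn.aestronglyMeasurable _ measurableSet_Ioo
        apply ContinuousOn.rpow_const continuousOn_id
        exact fun x hx => Or.inl (ne_of_gt hx.1)
      · rw [ae_restrict_iff' measurableSet_Ioo]
        apply ae_of_all
        intro v hv
        have hv0 : 0 < v := hv.1
        have hle := (hδprop v hv).2
        have hKv : K * v ^ (-c) ≤ Real.exp (Ψ (1 - v)) := by
          calc K * v ^ (-c)
              = Real.exp (Ψ (1 - δ) + c * (Real.log δ - Real.log v)) := by
                rw [hK_def, Real.rpow_def_of_pos hv0, ← Real.exp_add]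
                ring_nf
            _ ≤ Real.exp (Ψ (1 - v)) := Real.exp_le_exp.2 hle
        rw [Real.norm_eq_abs, abs_of_pos (Real.rpow_pos_of_pos hv0 _)]
        rw [← inv_mul_cancel_left₀ (ne_of_gt hK) (v ^ (-c))]
        exact mul_le_mul_of_nonneg_left hKv (by positivity)
    rw [intervalIntegral.integrableOn_Ioo_rpow_iff hδ0] at h2
    linarith
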